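/- For α ∈ (1,2), there is a constant c_α > 0 such that for all real a, b: ∫₀^∞ |(a−b)r − (sin(ar) − sin(br))| r^{-(1+α)} dr ≤ c_α (|a|+|b|)^{α−1} |a−b|. -/

import Mathlib

open MeasureTheory Real Set

/-- Lemma 2.6(iii), sine part: for `α ∈ (1,2)` there is `c_α > 0` with
`∫₀^∞ |(a−b)r − (sin(ar) − sin(br))| r^{-(1+α)} dr ≤ c_α (|a|+|b|)^{α−1} |a−b|`. -/
theorem stmt3 (α : ℝ) (hα : α ∈ Set.Ioo (1:ℝ) 2) :
    ∃ c > (0:ℝ), ∀ a b : ℝ,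
      (∫ r in Set.Ioi (0:ℝ),
          |(a - b) * r - (Real.sin (a * r) - Real.sin (b * r))| / r ^ (1 + α))
        ≤ c * (|a| + |b|) ^ (α - 1) * |a - b| := by
  obtain ⟨hα1, hα2⟩ := hα
  have h3α : 0 < 3 - α := by linarith
  have hα1' : 0 < α - 1 := by linarith
  refine ⟨1 / (2 * (3 - α)) + 2 / (α - 1), by positivity, ?_⟩
  intro a b
  by_cases hM : |a| + |b| = 0
  · have ha : a = 0 := abs_eq_zero.1 (by nlinarith [abs_nonneg a, abs_nonneg b])
    have hb : b = 0 := abs_eq_zero.1 (by nlinarith [abs_nonneg a, abs_nonneg b])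
    simp [ha, hb]
  set M := |a| + |b| with hMdef
  have hM0 : 0 < M := lt_of_le_of_ne (by rw [hMdef]; positivity) (Ne.symm hM)
  set R : ℝ := M⁻¹ with hR
  have hR0 : 0 < R := by rw [hR]; positivity
  clear_value M R
  -- Mean value theorem bound for the numerator
  have mvt : ∀ (r C : ℝ), (∀ t ∈ Set.uIcc b a, ‖r - Real.cos (t * r) * r‖ ≤ C) →
      |(a - b) * r - (Real.sin (a * r) - Real.sin (b * r))| ≤ C * |a - b| := by
    intro r C hC
    have hder : ∀ t ∈ Set.uIcc b a,
        HasDerivWithinAt (fun t : ℝ => t * r - Real.sin (t * r))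
          (r - Real.cos (t * r) * r) (Set.uIcc b a) t := by
      intro t _
      have h1 : HasDerivAt (fun t : ℝ => t * r) r t := by
        simpa using (hasDerivAt_id t).mul_const r
      have h2 : HasDerivAt (fun t : ℝ => Real.sin (t * r)) (Real.cos (t * r) * r) t :=
        h1.sin
      exact (h1.sub h2).hasDerivWithinAt
    have key := (convex_uIcc b a).norm_image_sub_le_of_norm_hasDerivWithin_le hder hC
      Set.left_mem_uIcc Set.right_mem_uIcc
    rw [Real.norm_eq_abs, Real.norm_eq_abs] at key
    calc |(a - b) * r - (Real.sin (a * r) - Real.sin (b * r))|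
        = |(a * r - Real.sin (a * r)) - (b * r - Real.sin (b * r))| := by congr 1; ring
      _ ≤ C * |a - b| := key
  have num_le1 : ∀ r : ℝ, 0 < r →
      |(a - b) * r - (Real.sin (a * r) - Real.sin (b * r))| ≤ (2 * r) * |a - b| := by
    intro r hr
    refine mvt r (2 * r) ?_
    intro t _
    have h1 : Real.cos (t * r) ≤ 1 := Real.cos_le_one _
    have h2 : -1 ≤ Real.cos (t * r) := Real.neg_one_le_cos _
    rw [Real.norm_eq_abs, abs_of_nonneg (by nlinarith)]
    nlinarith
  have num_le2 : ∀ r : ℝ, 0 < r →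
      |(a - b) * r - (Real.sin (a * r) - Real.sin (b * r))| ≤ (M ^ 2 * r ^ 3 / 2) * |a - b| := by
    intro r hr
    refine mvt r (M ^ 2 * r ^ 3 / 2) ?_
    intro t ht
    have htM : -M ≤ t ∧ t ≤ M := by
      rw [hMdef]
      rcases Set.mem_uIcc.1 ht with ⟨h1, h2⟩ | ⟨h1, h2⟩ <;>
        constructor <;>
        nlinarith [le_abs_self a, le_abs_self b, neg_abs_le a, neg_abs_le b]
    have ht2 : t ^ 2 ≤ M ^ 2 := by nlinarith [htM.1, htM.2]
    have hc : 1 - Real.cos (t * r) ≤ (t * r) ^ 2 / 2 := by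
      nlinarith [Real.one_sub_sq_div_two_le_cos (x := t * r)]
    have h1 : Real.cos (t * r) ≤ 1 := Real.cos_le_one _
    rw [Real.norm_eq_abs, abs_of_nonneg (by nlinarith)]
    have hA : r - Real.cos (t * r) * r ≤ t ^ 2 * r ^ 3 / 2 := by
      nlinarith [mul_le_mul_of_nonneg_left hc hr.le]
    have hB : t ^ 2 * r ^ 3 ≤ M ^ 2 * r ^ 3 :=
      mul_le_mul_of_nonneg_right ht2 (pow_nonneg hr.le 3)
    linarith
  -- measurability
  have meas : Measurable (fun r : ℝ =>
      |(a - b) * r - (Real.sin (a * r) - Real.sin (b * r))| / r ^ (1 + α)) := by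
    fun_prop
  -- pointwise bounds for the integrand
  have fb1 : ∀ r ∈ Set.Ioc (0:ℝ) R,
      |(a - b) * r - (Real.sin (a * r) - Real.sin (b * r))| / r ^ (1 + α)
        ≤ (|a - b| * M ^ 2 / 2) * r ^ (2 - α) := by
    intro r hr
    have hr0 : 0 < r := hr.1
    have hpow : (0:ℝ) < r ^ (1 + α) := Real.rpow_pos_of_pos hr0 _
    rw [div_le_iff₀ hpow]
    refine (num_le2 r hr0).trans (le_of_eq ?_)
    have h3 : r ^ (2 - α) * r ^ (1 + α) = r ^ (3:ℕ) := by
      rw [← Real.rpow_add hr0, ← Real.rpow_natCast r 3]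
      congr 1
      push_cast; ring
    rw [mul_assoc, h3]
    ring
  have fb2 : ∀ r ∈ Set.Ioi R,
      |(a - b) * r - (Real.sin (a * r) - Real.sin (b * r))| / r ^ (1 + α)
        ≤ (2 * |a - b|) * r ^ (-α) := by
    intro r hr
    have hr0 : 0 < r := hR0.trans hr
    have hpow : (0:ℝ) < r ^ (1 + α) := Real.rpow_pos_of_pos hr0 _
    rw [div_le_iff₀ hpow]
    refine (num_le1 r hr0).trans (le_of_eq ?_)
    have h3 : r ^ (-α) * r ^ (1 + α) = r ^ (1:ℕ) := by
      rw [← Real.rpow_add hr0, ← Real.rpow_natCast r 1]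
      congr 1
      push_cast; ring
    rw [mul_assoc (2 * |a - b|), h3]
    ring
  -- integrability of bounds
  have intb1 : IntegrableOn (fun r : ℝ => (|a - b| * M ^ 2 / 2) * r ^ (2 - α)) (Ioc 0 R) := by
    apply Integrable.const_mul
    exact (intervalIntegrable_iff_integrableOn_Ioc_of_le hR0.le).1
      (intervalIntegral.intervalIntegrable_rpow' (by linarith))
  have intb2 : IntegrableOn (fun r : ℝ => (2 * |a - b|) * r ^ (-α)) (Ioi R) := by
    apply Integrable.const_mul
    exact integrableOn_Ioi_rpow_of_lt (by linarith) hR0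
  -- integrability of the integrand
  have intf1 : IntegrableOn (fun r : ℝ =>
      |(a - b) * r - (Real.sin (a * r) - Real.sin (b * r))| / r ^ (1 + α)) (Ioc 0 R) := by
    refine Integrable.mono' intb1 meas.aestronglyMeasurable ?_
    filter_upwards [ae_restrict_mem measurableSet_Ioc] with r hr
    rw [Real.norm_eq_abs, abs_of_nonneg
      (div_nonneg (abs_nonneg _) (Real.rpow_pos_of_pos hr.1 _).le)]
    exact fb1 r hr
  have intf2 : IntegrableOn (fun r : ℝ =>
      |(a - b) * r - (Real.sin (a * r) - Real.sin (b * r))| / r ^ (1 + α)) (Ioi R) := by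
    refine Integrable.mono' intb2 meas.aestronglyMeasurable ?_
    filter_upwards [ae_restrict_mem measurableSet_Ioi] with r hr
    rw [Real.norm_eq_abs, abs_of_nonneg
      (div_nonneg (abs_nonneg _) (Real.rpow_pos_of_pos (hR0.trans hr) _).le)]
    exact fb2 r hr
  -- split the integral
  have hsplit : (∫ r in Set.Ioi (0:ℝ),
      |(a - b) * r - (Real.sin (a * r) - Real.sin (b * r))| / r ^ (1 + α))
      = (∫ r in Set.Ioc (0:ℝ) R,
          |(a - b) * r - (Real.sin (a * r) - Real.sin (b * r))| / r ^ (1 + α))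
        + ∫ r in Set.Ioi R,
            |(a - b) * r - (Real.sin (a * r) - Real.sin (b * r))| / r ^ (1 + α) := by
    rw [← Set.Ioc_union_Ioi_eq_Ioi hR0.le]
    exact setIntegral_union Set.Ioc_disjoint_Ioi_same measurableSet_Ioi intf1 intf2
  -- compute/bound each piece
  have I1 : (∫ r in Set.Ioc (0:ℝ) R,
      |(a - b) * r - (Real.sin (a * r) - Real.sin (b * r))| / r ^ (1 + α))
      ≤ (|a - b| * M ^ 2 / 2) * (R ^ (3 - α) / (3 - α)) := by
    refine (setIntegral_mono_on intf1 intb1 measurableSet_Ioc fb1).trans ?_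
    rw [integral_const_mul]
    have hI : (∫ r in Set.Ioc (0:ℝ) R, r ^ (2 - α)) = R ^ (3 - α) / (3 - α) := by
      rw [← intervalIntegral.integral_of_le hR0.le,
        integral_rpow (Or.inl (by linarith)),
        Real.zero_rpow (by intro h; nlinarith : (2 - α + 1) ≠ 0),
        show (2 - α + 1) = 3 - α by ring]
      ring
    rw [hI]
  have I2 : (∫ r in Set.Ioi R,
      |(a - b) * r - (Real.sin (a * r) - Real.sin (b * r))| / r ^ (1 + α))
      ≤ (2 * |a - b|) * (R ^ (1 - α) / (α - 1)) := by
    refine (setIntegral_mono_on intf2 intb2 measurableSet_Ioi fb2).trans ?_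
    rw [integral_const_mul, integral_Ioi_rpow_of_lt (by linarith) hR0,
      show (-α + 1) = 1 - α by ring]
    have e : -R ^ (1 - α) / (1 - α) = R ^ (1 - α) / (α - 1) := by
      rw [div_eq_div_iff (by intro h; nlinarith : (1 - α) ≠ 0)
        (by intro h; nlinarith : (α - 1) ≠ 0)]
      ring
    rw [e]
  rw [hsplit]
  refine (add_le_add I1 I2).trans (le_of_eq ?_)
  have e1 : R ^ (3 - α) = M ^ (α - 1) / M ^ 2 := by
    rw [eq_div_iff (pow_ne_zero 2 hM0.ne')]
    rw [hR, Real.inv_rpow hM0.le, ← Real.rpow_neg hM0.le, ← Real.rpow_natCast M 2,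
      ← Real.rpow_add hM0]
    congr 1
    push_cast; ring
  have e2 : R ^ (1 - α) = M ^ (α - 1) := by
    rw [hR, Real.inv_rpow hM0.le, ← Real.rpow_neg hM0.le, neg_sub]
  rw [e1, e2]
  have h3ne : (3 - α) ≠ 0 := by linarith
  have h1ne : (α - 1) ≠ 0 := by linarith
  field_simp
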